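/- Fix α ∈ (0,1) and an integer m ≥ 2, and let z ∈ ℝ. Then the infimum of Λ*(x,y) over all (x,y) ∈ ℝ² satisfying y Γ(1−α)/Γ(m−α) − m x = z equals z² / (2 σ²_{α,m}). -/

import Mathlib

open Real

/-- The limiting cumulant generating function
`Λ(s,t) = ½(s² + (2Γ(m-α)Γ(m+1)/(Γ(m)Γ(1-α))) st + (Γ(2m-α)/Γ(1-α) + α(Γ(m-α)/Γ(1-α))²) t²)`. -/
noncomputable def Lam (α : ℝ) (m : ℕ) (s t : ℝ) : ℝ :=
  (1 / 2) * (s ^ 2 +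
    (2 * Real.Gamma (m - α) * Real.Gamma (m + 1) / (Real.Gamma m * Real.Gamma (1 - α))) * s * t +
    (Real.Gamma (2 * m - α) / Real.Gamma (1 - α) +
      α * (Real.Gamma (m - α) / Real.Gamma (1 - α)) ^ 2) * t ^ 2)

/-- The Fenchel–Legendre transform `Λ*(x,y) = sup_{s,t} { sx + ty - Λ(s,t) }`. -/
noncomputable def LamStar (α : ℝ) (m : ℕ) (x y : ℝ) : ℝ :=
  ⨆ p : ℝ × ℝ, (p.1 * x + p.2 * y - Lam α m p.1 p.2)

/-- `σ²_{α,m} = Γ(2m-α)Γ(1-α)/Γ(m-α)² + α - m²`. -/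
noncomputable def sigmaSq (α : ℝ) (m : ℕ) : ℝ :=
  Real.Gamma (2 * m - α) * Real.Gamma (1 - α) / (Real.Gamma (m - α)) ^ 2 + α - m ^ 2

/-- Auxiliary polynomial inequality for the inductive step. -/
lemma step_ineq (α n : ℝ) (hα0 : 0 < α) (hα1 : α < 1) (hn : 2 ≤ n) :
    ((n+1)^2 - α)*(n-α)^2 ≤ (2*n-α+1)*((2*n-α))*(n^2-α) := by
  nlinarith [sq_nonneg (n-α), sq_nonneg (n-2), mul_nonneg (sub_nonneg.2 hn) (sub_nonneg.2 hn),
    mul_nonneg (mul_nonneg (sub_nonneg.2 hn) (sub_nonneg.2 hn)) (sub_nonneg.2 hn),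
    mul_pos hα0 (sub_pos.2 hα1), sq_nonneg α, sq_nonneg (n*α - n), sq_nonneg (n-1),
    mul_nonneg (sub_nonneg.2 hn) (le_of_lt (sub_pos.2 hα1)),
    mul_nonneg (mul_nonneg (sub_nonneg.2 hn) (sub_nonneg.2 hn)) (le_of_lt (sub_pos.2 hα1)),
    mul_nonneg (mul_nonneg (mul_nonneg (sub_nonneg.2 hn) (sub_nonneg.2 hn)) (sub_nonneg.2 hn)) (le_of_lt (sub_pos.2 hα1))]

/-- Key Gamma-function inequality: `(m²-α)Γ(m-α)² < Γ(2m-α)Γ(1-α)`, i.e. `σ²_{α,m} > 0`. -/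
lemma key_gamma_ineq (α : ℝ) (hα0 : 0 < α) (hα1 : α < 1) (m : ℕ) (hm : 2 ≤ m) :
    ((m:ℝ)^2 - α) * Real.Gamma ((m:ℝ) - α) ^ 2 <
      Real.Gamma (2*(m:ℝ) - α) * Real.Gamma (1 - α) := by
  induction m, hm using Nat.le_induction with
  | base =>
    have h2 : Real.Gamma (2*((2:ℕ):ℝ) - α) = (3-α)*((2-α)*((1-α)*Real.Gamma (1-α))) := by
      have e1 : (2*((2:ℕ):ℝ) - α) = (3-α)+1 := by push_cast; ring
      have e2 : (3-α : ℝ) = (2-α)+1 := by ring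
      have e3 : (2-α : ℝ) = (1-α)+1 := by ring
      rw [e1, Real.Gamma_add_one (by linarith), e2, Real.Gamma_add_one (by linarith),
        e3, Real.Gamma_add_one (by linarith)]
    have h1 : Real.Gamma (((2:ℕ):ℝ) - α) = (1-α)*Real.Gamma (1-α) := by
      have e3 : (((2:ℕ):ℝ) - α) = (1-α)+1 := by push_cast; ring
      rw [e3, Real.Gamma_add_one (by linarith)]
    rw [h1, h2]
    have hΓ : 0 < Real.Gamma (1-α) := Real.Gamma_pos_of_pos (by linarith)
    have he : ((((2:ℕ):ℝ))^2 - α) = 4 - α := by push_cast; ring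
    rw [he]
    nlinarith [sq_nonneg (Real.Gamma (1-α)), mul_pos hΓ hΓ]
  | succ n hn ih =>
    have hn' : (2:ℝ) ≤ (n:ℝ) := by exact_mod_cast hn
    have hΓ1 : 0 < Real.Gamma (1-α) := Real.Gamma_pos_of_pos (by linarith)
    have hΓn : 0 < Real.Gamma ((n:ℝ)-α) := Real.Gamma_pos_of_pos (by linarith)
    have hΓ2n : 0 < Real.Gamma (2*(n:ℝ)-α) := Real.Gamma_pos_of_pos (by linarith)
    have e1 : (2*(((n+1):ℕ):ℝ) - α) = ((2*(n:ℝ)-α)+1)+1 := by push_cast; ring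
    have e2 : ((((n+1):ℕ):ℝ) - α) = ((n:ℝ)-α)+1 := by push_cast; ring
    rw [e1, Real.Gamma_add_one (by linarith), Real.Gamma_add_one (by linarith),
      e2, Real.Gamma_add_one (by linarith)]
    push_cast
    have hK : (0:ℝ) < (2*(n:ℝ)-α+1)*(2*(n:ℝ)-α) := by nlinarith
    have h1 := step_ineq α (n:ℝ) hα0 hα1 hn'
    calc (((n:ℝ)+1)^2 - α) * (((n:ℝ)-α) * Real.Gamma ((n:ℝ)-α)) ^ 2
        = ((((n:ℝ)+1)^2 - α)*((n:ℝ)-α)^2) * Real.Gamma ((n:ℝ)-α)^2 := by ring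
      _ ≤ ((2*(n:ℝ)-α+1)*((2*(n:ℝ)-α))*((n:ℝ)^2-α)) * Real.Gamma ((n:ℝ)-α)^2 :=
          mul_le_mul_of_nonneg_right h1 (sq_nonneg _)
      _ = ((2*(n:ℝ)-α+1)*(2*(n:ℝ)-α)) * (((n:ℝ)^2-α) * Real.Gamma ((n:ℝ)-α)^2) := by ring
      _ < ((2*(n:ℝ)-α+1)*(2*(n:ℝ)-α)) * (Real.Gamma (2*(n:ℝ)-α) * Real.Gamma (1-α)) :=
          (mul_lt_mul_iff_right₀ hK).2 ih
      _ = (2*(n:ℝ)-α+1) * ((2*(n:ℝ)-α) * Real.Gamma (2*(n:ℝ)-α)) * Real.Gamma (1-α) := by ring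

/-- For `α ∈ (0,1)`, integer `m ≥ 2` and `z ∈ ℝ`, the infimum of `Λ*(x,y)` over the set
`{(x,y) : yΓ(1-α)/Γ(m-α) - mx = z}` equals `z²/(2σ²_{α,m})`. -/
theorem inf_LamStar_on_line (α : ℝ) (hα : α ∈ Set.Ioo (0:ℝ) 1) (m : ℕ) (hm : 2 ≤ m) (z : ℝ) :
    sInf {v : ℝ | ∃ x y : ℝ,
        y * Real.Gamma (1 - α) / Real.Gamma (m - α) - m * x = z ∧ v = LamStar α m x y} =
      z ^ 2 / (2 * sigmaSq α m) := by
  obtain ⟨hα0, hα1⟩ := hα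
  have hm2 : (2:ℝ) ≤ (m:ℝ) := by exact_mod_cast hm
  have hΓ1 : 0 < Real.Gamma (1-α) := Real.Gamma_pos_of_pos (by linarith)
  have hΓm : 0 < Real.Gamma ((m:ℝ)-α) := Real.Gamma_pos_of_pos (by linarith)
  have hΓmm : 0 < Real.Gamma (m:ℝ) := Real.Gamma_pos_of_pos (by linarith)
  have hΓm1 : Real.Gamma ((m:ℝ)+1) = m * Real.Gamma (m:ℝ) :=
    Real.Gamma_add_one (ne_of_gt (by linarith))
  set g : ℝ := Real.Gamma ((m:ℝ)-α)/Real.Gamma (1-α) with hgdef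
  have hg : 0 < g := div_pos hΓm hΓ1
  have hgne : g ≠ 0 := ne_of_gt hg
  set σ : ℝ := sigmaSq α m with hσdef
  have hσ : 0 < σ := by
    have h := key_gamma_ineq α hα0 hα1 m hm
    have h2 : (m:ℝ)^2 - α < Real.Gamma (2*(m:ℝ)-α)*Real.Gamma (1-α)/Real.Gamma ((m:ℝ)-α)^2 := by
      rw [lt_div_iff₀ (by positivity)]; linarith
    rw [hσdef]; unfold sigmaSq; linarith
  have hσne : σ ≠ 0 := ne_of_gt hσ
  -- normal form of Lam
  have hLam : ∀ s t : ℝ, Lam α m s t =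
      (1/2)*(s^2 + 2*((m:ℝ)*g)*s*t + ((m:ℝ)^2*g^2 + g^2*σ)*t^2) := by
    intro s t
    unfold Lam
    rw [hΓm1, hσdef, hgdef]
    unfold sigmaSq
    field_simp
    ring
  -- universal upper bound
  have key_ub : ∀ x y : ℝ, ∀ p : ℝ × ℝ, p.1*x + p.2*y - Lam α m p.1 p.2
      ≤ (1/2)*x^2 + (y - (m:ℝ)*g*x)^2/(2*(g^2*σ)) := by
    intro x y p
    rw [hLam p.1 p.2]
    have hid : (1/2)*x^2 + (y - (m:ℝ)*g*x)^2/(2*(g^2*σ))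
        - (p.1*x + p.2*y - (1/2)*(p.1^2 + 2*((m:ℝ)*g)*p.1*p.2 + ((m:ℝ)^2*g^2 + g^2*σ)*p.2^2))
        = (1/2)*(p.1 + (m:ℝ)*g*p.2 - x)^2
          + (g^2*σ*p.2 - (y - (m:ℝ)*g*x))^2/(2*(g^2*σ)) := by
      field_simp
      ring
    nlinarith [sq_nonneg (p.1 + (m:ℝ)*g*p.2 - x),
      div_nonneg (sq_nonneg (g^2*σ*p.2 - (y - (m:ℝ)*g*x))) (le_of_lt (by positivity : (0:ℝ) < 2*(g^2*σ)))]
  -- lower bound along the line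
  have hlb : ∀ x y : ℝ, y * Real.Gamma (1 - α) / Real.Gamma ((m:ℝ) - α) - m * x = z →
      z^2/(2*σ) ≤ LamStar α m x y := by
    intro x y hline
    have hy : y = (z + (m:ℝ)*x)*g := by
      rw [hgdef]
      field_simp at hline ⊢
      linarith
    have hB : BddAbove (Set.range fun p : ℝ×ℝ => p.1*x + p.2*y - Lam α m p.1 p.2) := by
      refine ⟨(1/2)*x^2 + (y - (m:ℝ)*g*x)^2/(2*(g^2*σ)), ?_⟩
      rintro v ⟨p, rfl⟩
      exact key_ub x y p
    have hle := le_ciSup hB ((-((m:ℝ)*(z/σ)), z/σ/g) : ℝ×ℝ)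
    rw [LamStar]
    refine le_trans (le_of_eq ?_) hle
    simp only
    rw [hLam, hy]
    field_simp
    ring
  -- the value is attained at x = 0, y = z*g
  have hline0 : (z*g) * Real.Gamma (1 - α) / Real.Gamma ((m:ℝ) - α) - m * 0 = z := by
    rw [hgdef]
    field_simp
    simp
  have hub : LamStar α m 0 (z*g) = z^2/(2*σ) := by
    apply le_antisymm
    · apply ciSup_le
      intro p
      refine le_trans (key_ub 0 (z*g) p) (le_of_eq ?_)
      field_simp
      ring
    · exact hlb 0 (z*g) hline0
  apply le_antisymm
  · refine csInf_le ⟨z^2/(2*σ), ?_⟩ ⟨0, z*g, hline0, hub.symm⟩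
    rintro v ⟨x, y, hxy, rfl⟩
    exact hlb x y hxy
  · refine le_csInf ⟨_, ⟨0, z*g, hline0, hub.symm⟩⟩ ?_
    rintro v ⟨x, y, hxy, rfl⟩
    exact hlb x y hxy
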